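/- Let b ≥ 1 and r ≥ 1 be integers such that every prime dividing r also divides b. Then for any finite sequence of complex numbers (c_m), Σ_{x mod b} |Σ_m c_m S(r x, m; b r)|² = b r² Σ*_{y mod b} |Σ_{m ≡ 0 mod r} c_m e(y (m/r) / b)|², where S(a, m; c) = Σ*_{h mod c} e((a h + m h̄)/c) is the Kloosterman sum, e(x) = e^{2πi x}, Σ* denotes summation over residues coprime to the modulus, and h̄ is the inverse of h mod c. -/

import Mathlib

/-- `e(x) = exp(2πix)`. -/
noncomputable def eBase (x : ℝ) : ℂ := Complex.exp (2 * Real.pi * Complex.I * x)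

/-- The Kloosterman sum `S(a,b;c) = Σ*_{h mod c} e((a h + b h̄)/c)`. -/
noncomputable def kloosterman (a b : ℤ) (c : ℕ) : ℂ :=
  if h : c = 0 then 0 else
    haveI : NeZero c := ⟨h⟩
    ∑ u : (ZMod c)ˣ,
      eBase (((a * (((u : ZMod c)).val : ℤ) + b * ((((u⁻¹ : (ZMod c)ˣ) : ZMod c)).val : ℤ) : ℤ) : ℝ) / c)

noncomputable def eInt (k : ℤ) (n : ℕ) : ℂ := eBase ((k : ℝ) / n)

lemma eInt_add (j k : ℤ) (n : ℕ) : eInt (j + k) n = eInt j n * eInt k n := by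
  simp only [eInt, eBase, ← Complex.exp_add]
  congr 1
  push_cast
  ring

lemma eInt_int_mul (k : ℤ) (n : ℕ) (hn : n ≠ 0) : eInt (n * k) n = 1 := by
  have h : (((n : ℤ) * k : ℤ) : ℝ) / n = (k : ℝ) := by
    push_cast
    field_simp
  rw [eInt, eBase, h, show (2 * (Real.pi:ℂ) * Complex.I * ((k:ℝ):ℂ)) = (k:ℤ) * (2 * Real.pi * Complex.I) by push_cast; ring]
  exact Complex.exp_int_mul_two_pi_mul_I k

lemma eInt_conj (k : ℤ) (n : ℕ) : (starRingEnd ℂ) (eInt k n) = eInt (-k) n := by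
  rw [eInt, eInt, eBase, eBase, ← Complex.exp_conj]
  congr 1
  simp [map_mul, map_ofNat, Complex.conj_I, Complex.conj_ofReal]
  ring

lemma eInt_pow (m : ℤ) (t n : ℕ) : eInt (m * t) n = (eInt m n) ^ t := by
  rw [eInt, eInt, eBase, eBase, ← Complex.exp_nat_mul]
  congr 1
  push_cast
  ring

lemma eInt_eq_one (m : ℤ) (n : ℕ) (hn : n ≠ 0) (h : (n:ℤ) ∣ m) : eInt m n = 1 := by
  obtain ⟨k, rfl⟩ := h
  exact eInt_int_mul k n hn

lemma eInt_ne_one (m : ℤ) (n : ℕ) (hn : n ≠ 0) (h : ¬ (n:ℤ) ∣ m) : eInt m n ≠ 1 := by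
  intro h1
  apply h
  rw [eInt, eBase, Complex.exp_eq_one_iff] at h1
  obtain ⟨k, hk⟩ := h1
  have h2 : (((m:ℝ)/n : ℝ) : ℂ) = (k : ℂ) := by
    have hne : (2 * (Real.pi:ℂ) * Complex.I) ≠ 0 := by
      simp [Real.pi_ne_zero, Complex.I_ne_zero]
    apply mul_left_cancel₀ hne
    rw [hk]; ring
  have h3 : (m : ℝ) / n = (k : ℝ) := by exact_mod_cast h2
  have h4 : (m : ℝ) = (k : ℝ) * n := by
    field_simp at h3
    linarith [h3]
  have h5 : m = k * n := by exact_mod_cast h4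
  exact ⟨k, by linarith [h5]⟩

lemma sum_eInt (m : ℤ) (d : ℕ) (hd : d ≠ 0) :
    (∑ t ∈ Finset.range d, eInt (m * t) d) = if (d:ℤ) ∣ m then (d:ℂ) else 0 := by
  by_cases h : (d:ℤ) ∣ m
  · rw [if_pos h]
    have : ∀ t ∈ Finset.range d, eInt (m * t) d = 1 := by
      intro t _
      exact eInt_eq_one _ _ hd (Dvd.dvd.mul_right h _)
    rw [Finset.sum_congr rfl this]
    simp
  · rw [if_neg h]
    have hz : eInt m d ≠ 1 := eInt_ne_one m d hd h
    have : (∑ t ∈ Finset.range d, eInt (m * t) d) = ∑ t ∈ Finset.range d, (eInt m d) ^ t :=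
      Finset.sum_congr rfl (fun t _ => eInt_pow m t d)
    rw [this, geom_sum_eq hz]
    have hpow : (eInt m d) ^ d = 1 := by
      rw [← eInt_pow]
      exact eInt_eq_one _ _ hd ⟨m, by ring⟩
    rw [hpow]
    simp

lemma eInt_left {b r : ℕ} (hr : r ≠ 0) (k : ℤ) : eInt ((r:ℤ) * k) (b * r) = eInt k b := by
  rw [eInt, eInt]
  congr 1
  push_cast
  rw [mul_comm (b:ℝ) (r:ℝ), mul_div_mul_left _ _ (by exact_mod_cast hr)]

lemma eInt_right {b r : ℕ} (hb : b ≠ 0) (k : ℤ) : eInt ((b:ℤ) * k) (b * r) = eInt k r := by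
  rw [eInt, eInt]
  congr 1
  push_cast
  rw [mul_div_mul_left _ _ (by exact_mod_cast hb : (b:ℝ) ≠ 0)]

lemma eInt_natCast (a n : ℕ) : eInt (a : ℤ) n = eBase ((a : ℝ) / n) := by
  rw [eInt, Int.cast_natCast]

lemma norm_sq_re (z : ℂ) : ‖z‖ ^ 2 = (z * (starRingEnd ℂ) z).re := by
  rw [Complex.mul_conj, Complex.ofReal_re, Complex.normSq_eq_norm_sq]

lemma coprime_mul_of_rad {b r : ℕ} (hrad : ∀ p : ℕ, p.Prime → p ∣ r → p ∣ b)
    {x : ℕ} (hx : Nat.Coprime x b) : Nat.Coprime x (b * r) := by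
  refine Nat.Coprime.mul_right hx ?_
  by_contra h
  have h1 : Nat.gcd x r ≠ 1 := h
  have hp : (Nat.gcd x r).minFac.Prime := Nat.minFac_prime h1
  have hpx : (Nat.gcd x r).minFac ∣ x := (Nat.minFac_dvd _).trans (Nat.gcd_dvd_left _ _)
  have hpr : (Nat.gcd x r).minFac ∣ r := (Nat.minFac_dvd _).trans (Nat.gcd_dvd_right _ _)
  have hpb := hrad _ hp hpr
  have hone : (Nat.gcd x r).minFac ∣ 1 := hx ▸ Nat.dvd_gcd hpx hpb
  exact hp.ne_one (Nat.dvd_one.mp hone)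

lemma fiber_sum (b r : ℕ) [NeZero b] [NeZero r]
    (hrad : ∀ p : ℕ, p.Prime → p ∣ r → p ∣ b) (m : ℕ) (z : (ZMod b)ˣ) :
    ∑ g ∈ Finset.univ.filter
        (fun g : (ZMod (b*r))ˣ =>
          Units.map (ZMod.castHom (dvd_mul_right b r) (ZMod b)).toMonoidHom g = z),
      eInt ((m:ℤ) * (((g : ZMod (b*r)).val : ℕ) : ℤ)) (b*r)
    = if r ∣ m then (r:ℂ) * eInt (((m / r : ℕ) : ℤ) * (((z : ZMod b).val : ℕ) : ℤ)) b else 0 := by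
  have hb0 : b ≠ 0 := NeZero.ne b
  have hr0 : r ≠ 0 := NeZero.ne r
  have hbpos : 0 < b := Nat.pos_of_ne_zero hb0
  set zv := (z : ZMod b).val with hzv
  have hzvb : zv < b := ZMod.val_lt _
  have hzcop : Nat.Coprime zv b := ZMod.val_coe_unit_coprime z
  have hcop : ∀ t : ℕ, Nat.Coprime (zv + b * t) (b * r) := fun t =>
    coprime_mul_of_rad hrad ((Nat.coprime_add_mul_left_left zv b t).mpr hzcop)
  have hval : ∀ g : (ZMod (b*r))ˣ,
      Units.map (ZMod.castHom (dvd_mul_right b r) (ZMod b)).toMonoidHom g = z →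
      zv + b * ((g : ZMod (b*r)).val / b) = (g : ZMod (b*r)).val := by
    intro g hg
    have h1 : ((((g : ZMod (b*r)).val : ℕ)) : ZMod b) = (z : ZMod b) := by
      rw [ZMod.natCast_val]
      rw [← ZMod.castHom_apply (h := dvd_mul_right b r)]
      rw [← hg]
      rfl
    have h2 : zv = (g : ZMod (b*r)).val % b := by
      rw [hzv, ← h1, ZMod.val_natCast]
    rw [h2, Nat.mod_add_div]
  have key : (∑ g ∈ Finset.univ.filter
        (fun g : (ZMod (b*r))ˣ =>
          Units.map (ZMod.castHom (dvd_mul_right b r) (ZMod b)).toMonoidHom g = z),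
      eInt ((m:ℤ) * (((g : ZMod (b*r)).val : ℕ) : ℤ)) (b*r))
      = ∑ t ∈ Finset.range r, eInt ((m:ℤ) * ((zv : ℤ) + (b:ℤ) * (t:ℤ))) (b*r) := by
    refine Finset.sum_nbij' (fun g => (g : ZMod (b*r)).val / b)
      (fun t => ZMod.unitOfCoprime (zv + b * t) (hcop t)) ?_ ?_ ?_ ?_ ?_
    · intro g hg
      rw [Finset.mem_range]
      exact Nat.div_lt_of_lt_mul (ZMod.val_lt ((g : (ZMod (b*r))ˣ) : ZMod (b*r)))
    · intro t ht
      rw [Finset.mem_filter]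
      refine ⟨Finset.mem_univ _, ?_⟩
      apply Units.ext
      rw [Units.coe_map]
      have hco : ((ZMod.unitOfCoprime (zv + b * t) (hcop t) : (ZMod (b*r))ˣ) : ZMod (b*r))
          = ((zv + b * t : ℕ) : ZMod (b*r)) := ZMod.coe_unitOfCoprime _ _
      show (ZMod.castHom (dvd_mul_right b r) (ZMod b))
        ((ZMod.unitOfCoprime (zv + b * t) (hcop t) : (ZMod (b*r))ˣ) : ZMod (b*r)) = (z : ZMod b)
      rw [hco, map_natCast]
      push_cast
      rw [ZMod.natCast_self]
      rw [hzv, ZMod.natCast_val, ZMod.cast_id]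
      ring
    · intro g hg
      rw [Finset.mem_filter] at hg
      apply Units.ext
      rw [ZMod.coe_unitOfCoprime, hval g hg.2, ZMod.natCast_val, ZMod.cast_id]
    · intro t ht
      rw [Finset.mem_range] at ht
      show ((ZMod.unitOfCoprime (zv + b * t) (hcop t) : (ZMod (b*r))ˣ) : ZMod (b*r)).val / b = t
      have hlt : zv + b * t < b * r := by
        calc zv + b * t < b + b * t := by omega
        _ = b * (t + 1) := by ring
        _ ≤ b * r := Nat.mul_le_mul_left b (by omega)
      rw [ZMod.coe_unitOfCoprime, ZMod.val_natCast_of_lt hlt,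
        Nat.add_mul_div_left _ _ hbpos, Nat.div_eq_of_lt hzvb, zero_add]
    · intro g hg
      rw [Finset.mem_filter] at hg
      congr 2
      conv_lhs => rw [← hval g hg.2]
      push_cast
      ring
  refine key.trans ?_
  have expand : ∀ t ∈ Finset.range r, eInt ((m:ℤ) * ((zv : ℤ) + (b:ℤ) * (t:ℤ))) (b*r)
      = eInt ((m:ℤ) * (zv:ℤ)) (b*r) * eInt ((m:ℤ) * (t:ℤ)) r := by
    intro t _
    rw [show ((m:ℤ) * ((zv : ℤ) + (b:ℤ) * (t:ℤ))) = (m:ℤ) * (zv:ℤ) + (b:ℤ) * ((m:ℤ) * t) by ring,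
      eInt_add, eInt_right hb0]
  rw [Finset.sum_congr rfl expand, ← Finset.mul_sum, sum_eInt _ _ hr0]
  by_cases hrm : r ∣ m
  · rw [if_pos (Int.natCast_dvd_natCast.mpr hrm), if_pos hrm]
    obtain ⟨k, rfl⟩ := hrm
    have hk : (r * k) / r = k := Nat.mul_div_cancel_left k (Nat.pos_of_ne_zero hr0)
    rw [hk]
    rw [show ((r * k : ℕ) : ℤ) * (zv:ℤ) = (r:ℤ) * ((k:ℤ) * (zv:ℤ)) by push_cast; ring,
      eInt_left hr0]
    ring
  · rw [if_neg (fun h => hrm (Int.natCast_dvd_natCast.mp h)), if_neg hrm, mul_zero]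

lemma eInt_def (k : ℤ) (n : ℕ) : eBase ((k:ℝ) / (n:ℝ)) = eInt k n := rfl

lemma main_complex (b r M : ℕ) [NeZero b] [NeZero r]
    (hrad : ∀ p : ℕ, p.Prime → p ∣ r → p ∣ b) (c : ℕ → ℂ) :
    (∑ x ∈ Finset.range b,
      (∑ m ∈ Finset.Icc 1 M, c m * kloosterman (r * x) m (b * r)) *
        (starRingEnd ℂ) (∑ m ∈ Finset.Icc 1 M, c m * kloosterman (r * x) m (b * r)))
    = (b:ℂ) * (r:ℂ)^2 *
      ∑ y ∈ (Finset.range b).filter (fun y => Nat.Coprime y b),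
        (∑ m ∈ (Finset.Icc 1 M).filter (fun m => r ∣ m),
            c m * eInt (((y * (m / r) : ℕ)) : ℤ) b) *
          (starRingEnd ℂ) (∑ m ∈ (Finset.Icc 1 M).filter (fun m => r ∣ m),
            c m * eInt (((y * (m / r) : ℕ)) : ℤ) b) := by
  have hb0 : b ≠ 0 := NeZero.ne b
  have hr0 : r ≠ 0 := NeZero.ne r
  have hn0 : b * r ≠ 0 := Nat.mul_ne_zero hb0 hr0
  haveI : NeZero (b * r) := ⟨hn0⟩
  set π : (ZMod (b*r))ˣ →* (ZMod b)ˣ :=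
    Units.map (ZMod.castHom (dvd_mul_right b r) (ZMod b)).toMonoidHom with hπ
  set A : (ZMod (b*r))ˣ → ℂ := fun u => ∑ m ∈ Finset.Icc 1 M,
    c m * eInt ((m:ℤ) * (((u⁻¹ : (ZMod (b*r))ˣ) : ZMod (b*r)).val : ℤ)) (b*r) with hA
  set B : (ZMod b)ˣ → ℂ :=
    fun w => ∑ u ∈ Finset.univ.filter (fun u => π u = w), A u with hB
  set G : (ZMod b)ˣ → ℂ := fun z => ∑ m ∈ (Finset.Icc 1 M).filter (fun m => r ∣ m),
    c m * eInt (((m / r : ℕ):ℤ) * (((z : ZMod b).val : ℕ) : ℤ)) b with hG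
  -- Step 1: Kloosterman sum expansion
  have hK : ∀ x m : ℕ, kloosterman (r * x) m (b * r)
      = ∑ u : (ZMod (b*r))ˣ, eInt ((x:ℤ) * (((u : ZMod (b*r)).val : ℕ) : ℤ)) b *
          eInt ((m:ℤ) * (((u⁻¹ : (ZMod (b*r))ˣ) : ZMod (b*r)).val : ℤ)) (b*r) := by
    intro x m
    rw [kloosterman, dif_neg hn0]
    refine Finset.sum_congr rfl fun u _ => ?_
    rw [eInt_def, eInt_add]
    congr 1
    rw [← eInt_left (b := b) hr0 ((x:ℤ) * (((u : ZMod (b*r)).val : ℕ) : ℤ))]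
    congr 1
    ring
  -- Step 2: inner sum rearrangement
  have hF : ∀ x : ℕ, (∑ m ∈ Finset.Icc 1 M, c m * kloosterman (r * x) m (b * r))
      = ∑ u : (ZMod (b*r))ˣ, eInt ((x:ℤ) * (((u : ZMod (b*r)).val : ℕ) : ℤ)) b * A u := by
    intro x
    calc ∑ m ∈ Finset.Icc 1 M, c m * kloosterman (r * x) m (b * r)
        = ∑ m ∈ Finset.Icc 1 M, ∑ u : (ZMod (b*r))ˣ,
            c m * (eInt ((x:ℤ) * (((u : ZMod (b*r)).val : ℕ) : ℤ)) b *
              eInt ((m:ℤ) * (((u⁻¹ : (ZMod (b*r))ˣ) : ZMod (b*r)).val : ℤ)) (b*r)) :=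
          Finset.sum_congr rfl fun m _ => by rw [hK x m, Finset.mul_sum]
      _ = ∑ u : (ZMod (b*r))ˣ, ∑ m ∈ Finset.Icc 1 M,
            c m * (eInt ((x:ℤ) * (((u : ZMod (b*r)).val : ℕ) : ℤ)) b *
              eInt ((m:ℤ) * (((u⁻¹ : (ZMod (b*r))ˣ) : ZMod (b*r)).val : ℤ)) (b*r)) :=
          Finset.sum_comm
      _ = ∑ u : (ZMod (b*r))ˣ, eInt ((x:ℤ) * (((u : ZMod (b*r)).val : ℕ) : ℤ)) b * A u := by
          refine Finset.sum_congr rfl fun u _ => ?_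
          rw [hA, Finset.mul_sum]
          exact Finset.sum_congr rfl fun m _ => by ring
  -- Step 3: conjugate expansion
  have hconj : ∀ x : ℕ,
      (starRingEnd ℂ) (∑ u : (ZMod (b*r))ˣ, eInt ((x:ℤ) * (((u : ZMod (b*r)).val : ℕ) : ℤ)) b * A u)
      = ∑ v : (ZMod (b*r))ˣ, eInt (-((x:ℤ) * (((v : ZMod (b*r)).val : ℕ) : ℤ))) b *
          (starRingEnd ℂ) (A v) := by
    intro x
    rw [map_sum]
    exact Finset.sum_congr rfl fun v _ => by rw [map_mul, eInt_conj]
  -- Step 4: orthogonality in x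
  have horth : ∀ u v : (ZMod (b*r))ˣ,
      (∑ x ∈ Finset.range b,
        (eInt ((x:ℤ) * (((u : ZMod (b*r)).val : ℕ) : ℤ)) b * A u) *
          (eInt (-((x:ℤ) * (((v : ZMod (b*r)).val : ℕ) : ℤ))) b * (starRingEnd ℂ) (A v)))
      = if π u = π v then (b:ℂ) * (A u * (starRingEnd ℂ) (A v)) else 0 := by
    intro u v
    have hterm : ∀ x ∈ Finset.range b,
        (eInt ((x:ℤ) * (((u : ZMod (b*r)).val : ℕ) : ℤ)) b * A u) *
          (eInt (-((x:ℤ) * (((v : ZMod (b*r)).val : ℕ) : ℤ))) b * (starRingEnd ℂ) (A v))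
        = (A u * (starRingEnd ℂ) (A v)) *
            eInt (((((u : ZMod (b*r)).val : ℕ) : ℤ) - (((v : ZMod (b*r)).val : ℕ) : ℤ)) * (x:ℤ)) b := by
      intro x _
      rw [show (((((u : ZMod (b*r)).val : ℕ) : ℤ) - (((v : ZMod (b*r)).val : ℕ) : ℤ)) * (x:ℤ))
          = (x:ℤ) * (((u : ZMod (b*r)).val : ℕ) : ℤ) + -((x:ℤ) * (((v : ZMod (b*r)).val : ℕ) : ℤ))
          by ring, eInt_add]
      ring
    rw [Finset.sum_congr rfl hterm, ← Finset.mul_sum, sum_eInt _ _ hb0]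
    have hcond : ((b:ℤ) ∣ ((((u : ZMod (b*r)).val : ℕ) : ℤ) - (((v : ZMod (b*r)).val : ℕ) : ℤ)))
        ↔ π u = π v := by
      have h1 : (π u = π v) ↔
          ((((u : ZMod (b*r)).val : ℕ) : ZMod b) = (((v : ZMod (b*r)).val : ℕ) : ZMod b)) := by
        rw [Units.ext_iff, hπ]
        show (ZMod.castHom (dvd_mul_right b r) (ZMod b)) ((u : ZMod (b*r)))
            = (ZMod.castHom (dvd_mul_right b r) (ZMod b)) ((v : ZMod (b*r))) ↔ _
        rw [ZMod.castHom_apply, ZMod.castHom_apply, ← ZMod.natCast_val, ← ZMod.natCast_val]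
      rw [h1, ZMod.natCast_eq_natCast_iff, Nat.modEq_iff_dvd, dvd_sub_comm]
    by_cases h : π u = π v
    · rw [if_pos (hcond.mpr h), if_pos h]; ring
    · rw [if_neg (fun hd => h (hcond.mp hd)), if_neg h, mul_zero]
  -- Step 5: put together, group fibers
  have step5 : (∑ x ∈ Finset.range b,
      (∑ m ∈ Finset.Icc 1 M, c m * kloosterman (r * x) m (b * r)) *
        (starRingEnd ℂ) (∑ m ∈ Finset.Icc 1 M, c m * kloosterman (r * x) m (b * r)))
      = ∑ u : (ZMod (b*r))ˣ, ∑ v : (ZMod (b*r))ˣ,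
          (if π u = π v then (b:ℂ) * (A u * (starRingEnd ℂ) (A v)) else 0) := by
    calc (∑ x ∈ Finset.range b,
        (∑ m ∈ Finset.Icc 1 M, c m * kloosterman (r * x) m (b * r)) *
          (starRingEnd ℂ) (∑ m ∈ Finset.Icc 1 M, c m * kloosterman (r * x) m (b * r)))
        = ∑ x ∈ Finset.range b, ∑ u : (ZMod (b*r))ˣ, ∑ v : (ZMod (b*r))ˣ,
            (eInt ((x:ℤ) * (((u : ZMod (b*r)).val : ℕ) : ℤ)) b * A u) *
              (eInt (-((x:ℤ) * (((v : ZMod (b*r)).val : ℕ) : ℤ))) b * (starRingEnd ℂ) (A v)) := by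
          refine Finset.sum_congr rfl fun x _ => ?_
          rw [hF x, hconj x, Finset.sum_mul_sum]
      _ = ∑ u : (ZMod (b*r))ˣ, ∑ v : (ZMod (b*r))ˣ, ∑ x ∈ Finset.range b,
            (eInt ((x:ℤ) * (((u : ZMod (b*r)).val : ℕ) : ℤ)) b * A u) *
              (eInt (-((x:ℤ) * (((v : ZMod (b*r)).val : ℕ) : ℤ))) b * (starRingEnd ℂ) (A v)) := by
          rw [Finset.sum_comm]
          exact Finset.sum_congr rfl fun u _ => Finset.sum_comm
      _ = ∑ u : (ZMod (b*r))ˣ, ∑ v : (ZMod (b*r))ˣ,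
            (if π u = π v then (b:ℂ) * (A u * (starRingEnd ℂ) (A v)) else 0) :=
          Finset.sum_congr rfl fun u _ => Finset.sum_congr rfl fun v _ => horth u v
  -- Step 6: fiberwise grouping
  have step6 : (∑ u : (ZMod (b*r))ˣ, ∑ v : (ZMod (b*r))ˣ,
      (if π u = π v then (b:ℂ) * (A u * (starRingEnd ℂ) (A v)) else 0))
      = (b:ℂ) * ∑ w : (ZMod b)ˣ, B w * (starRingEnd ℂ) (B w) := by
    have inner : ∀ u : (ZMod (b*r))ˣ,
        (∑ v : (ZMod (b*r))ˣ, (if π u = π v then (b:ℂ) * (A u * (starRingEnd ℂ) (A v)) else 0))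
        = (b:ℂ) * A u * (starRingEnd ℂ) (B (π u)) := by
      intro u
      have : ∀ v : (ZMod (b*r))ˣ,
          (if π u = π v then (b:ℂ) * (A u * (starRingEnd ℂ) (A v)) else 0)
          = ((b:ℂ) * A u) * (if π v = π u then (starRingEnd ℂ) (A v) else 0) := by
        intro v
        by_cases h : π u = π v
        · rw [if_pos h, if_pos h.symm]; ring
        · rw [if_neg h, if_neg (fun hh => h hh.symm), mul_zero]
      rw [Finset.sum_congr rfl (fun v _ => this v), ← Finset.mul_sum]
      have hBc : (starRingEnd ℂ) (B (π u))
          = ∑ v : (ZMod (b*r))ˣ, (if π v = π u then (starRingEnd ℂ) (A v) else 0) := by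
        simp only [hB]
        rw [map_sum, Finset.sum_filter]
      rw [hBc]
    calc (∑ u : (ZMod (b*r))ˣ, ∑ v : (ZMod (b*r))ˣ,
        (if π u = π v then (b:ℂ) * (A u * (starRingEnd ℂ) (A v)) else 0))
        = ∑ u : (ZMod (b*r))ˣ, (b:ℂ) * A u * (starRingEnd ℂ) (B (π u)) :=
          Finset.sum_congr rfl fun u _ => inner u
      _ = ∑ w : (ZMod b)ˣ, ∑ u ∈ Finset.univ.filter (fun u => π u = w),
            (b:ℂ) * A u * (starRingEnd ℂ) (B (π u)) :=
          (Finset.sum_fiberwise Finset.univ (fun u => π u)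
            (fun u => (b:ℂ) * A u * (starRingEnd ℂ) (B (π u)))).symm
      _ = ∑ w : (ZMod b)ˣ, (b:ℂ) * (B w * (starRingEnd ℂ) (B w)) := by
          refine Finset.sum_congr rfl fun w _ => ?_
          have : ∀ u ∈ Finset.univ.filter (fun u => π u = w),
              (b:ℂ) * A u * (starRingEnd ℂ) (B (π u))
              = ((b:ℂ) * (starRingEnd ℂ) (B w)) * A u := by
            intro u hu
            rw [Finset.mem_filter] at hu
            rw [hu.2]; ring
          rw [Finset.sum_congr rfl this, ← Finset.mul_sum, hB]
          ring
      _ = (b:ℂ) * ∑ w : (ZMod b)ˣ, B w * (starRingEnd ℂ) (B w) := by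
          rw [Finset.mul_sum]
  -- Step 7: evaluate B via fiber_sum
  have hBval : ∀ w : (ZMod b)ˣ, B w = (r:ℂ) * G w⁻¹ := by
    intro w
    simp only [hB]
    have reindex : (∑ u ∈ Finset.univ.filter (fun u => π u = w), A u)
        = ∑ g ∈ Finset.univ.filter (fun g => π g = w⁻¹), ∑ m ∈ Finset.Icc 1 M,
            c m * eInt ((m:ℤ) * (((g : ZMod (b*r)).val : ℕ) : ℤ)) (b*r) := by
      refine Finset.sum_nbij' (fun u => u⁻¹) (fun g => g⁻¹) ?_ ?_ ?_ ?_ ?_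
      · intro u hu
        rw [Finset.mem_filter] at hu ⊢
        exact ⟨Finset.mem_univ _, by rw [map_inv, hu.2]⟩
      · intro g hg
        rw [Finset.mem_filter] at hg ⊢
        refine ⟨Finset.mem_univ _, ?_⟩
        rw [map_inv, hg.2, inv_inv]
      · intro u _; exact inv_inv u
      · intro g _; exact inv_inv g
      · intro u _
        simp only [hA]
    rw [reindex, Finset.sum_comm]
    have inner2 : ∀ m ∈ Finset.Icc 1 M,
        (∑ g ∈ Finset.univ.filter (fun g => π g = w⁻¹),
          c m * eInt ((m:ℤ) * (((g : ZMod (b*r)).val : ℕ) : ℤ)) (b*r))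
        = if r ∣ m then c m * ((r:ℂ) *
            eInt (((m / r : ℕ):ℤ) * ((((w⁻¹ : (ZMod b)ˣ) : ZMod b).val : ℕ) : ℤ)) b) else 0 := by
      intro m _
      rw [← Finset.mul_sum, hπ]
      rw [fiber_sum b r hrad m w⁻¹]
      by_cases h : r ∣ m
      · rw [if_pos h, if_pos h]
      · rw [if_neg h, if_neg h, mul_zero]
    rw [Finset.sum_congr rfl inner2, ← Finset.sum_filter]
    simp only [hG]
    rw [Finset.mul_sum]
    exact Finset.sum_congr rfl fun m _ => by ring
  -- Step 8: finish
  rw [step5, step6]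
  have step8 : (∑ w : (ZMod b)ˣ, B w * (starRingEnd ℂ) (B w))
      = (r:ℂ)^2 * ∑ w : (ZMod b)ˣ, G w * (starRingEnd ℂ) (G w) := by
    calc (∑ w : (ZMod b)ˣ, B w * (starRingEnd ℂ) (B w))
        = ∑ w : (ZMod b)ˣ, (r:ℂ)^2 * (G w⁻¹ * (starRingEnd ℂ) (G w⁻¹)) := by
          refine Finset.sum_congr rfl fun w _ => ?_
          rw [hBval w, map_mul]
          have : (starRingEnd ℂ) ((r:ℂ)) = (r:ℂ) := Complex.conj_natCast r
          rw [this]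
          ring
      _ = (r:ℂ)^2 * ∑ w : (ZMod b)ˣ, G w⁻¹ * (starRingEnd ℂ) (G w⁻¹) := by
          rw [Finset.mul_sum]
      _ = (r:ℂ)^2 * ∑ w : (ZMod b)ˣ, G w * (starRingEnd ℂ) (G w) := by
          congr 1
          exact Fintype.sum_equiv (Equiv.inv (ZMod b)ˣ)
            (fun w => G w⁻¹ * (starRingEnd ℂ) (G w⁻¹))
            (fun w => G w * (starRingEnd ℂ) (G w)) (fun w => rfl)
  rw [step8]
  -- Step 9: units sum → coprime residues sum
  have step9 : (∑ w : (ZMod b)ˣ, G w * (starRingEnd ℂ) (G w))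
      = ∑ y ∈ (Finset.range b).filter (fun y => Nat.Coprime y b),
        (∑ m ∈ (Finset.Icc 1 M).filter (fun m => r ∣ m),
            c m * eInt (((y * (m / r) : ℕ)) : ℤ) b) *
          (starRingEnd ℂ) (∑ m ∈ (Finset.Icc 1 M).filter (fun m => r ∣ m),
            c m * eInt (((y * (m / r) : ℕ)) : ℤ) b) := by
    refine Finset.sum_nbij' (fun w => ((w : ZMod b).val : ℕ))
      (fun y => if h : Nat.Coprime y b then ZMod.unitOfCoprime y h else 1) ?_ ?_ ?_ ?_ ?_
    · intro w _
      rw [Finset.mem_filter, Finset.mem_range]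
      exact ⟨ZMod.val_lt _, ZMod.val_coe_unit_coprime w⟩
    · intro y _; exact Finset.mem_univ _
    · intro w _
      rw [dif_pos (ZMod.val_coe_unit_coprime w)]
      apply Units.ext
      rw [ZMod.coe_unitOfCoprime, ZMod.natCast_val, ZMod.cast_id]
    · intro y hy
      rw [Finset.mem_filter, Finset.mem_range] at hy
      rw [dif_pos hy.2, ZMod.coe_unitOfCoprime, ZMod.val_natCast_of_lt hy.1]
    · intro w _
      have hGw : G w = ∑ m ∈ (Finset.Icc 1 M).filter (fun m => r ∣ m),
          c m * eInt ((((w : ZMod b).val * (m / r) : ℕ)) : ℤ) b := by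
        rw [hG]
        refine Finset.sum_congr rfl fun m _ => ?_
        congr 1
        congr 1
        push_cast
        ring
      rw [hGw]
  rw [step9]
  ring

theorem stmt_8 (b r M : ℕ) (hb : 1 ≤ b) (hr : 1 ≤ r)
    (hrad : ∀ p : ℕ, p.Prime → p ∣ r → p ∣ b) (c : ℕ → ℂ) :
    ∑ x ∈ Finset.range b, ‖∑ m ∈ Finset.Icc 1 M, c m * kloosterman (r * x) m (b * r)‖ ^ 2
      = (b : ℝ) * r ^ 2 *
        ∑ y ∈ (Finset.range b).filter (fun y => Nat.Coprime y b),
          ‖∑ m ∈ (Finset.Icc 1 M).filter (fun m => r ∣ m),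
              c m * eBase (((y * (m / r) : ℕ) : ℝ) / (b : ℝ))‖ ^ 2 := by
  haveI : NeZero b := ⟨by omega⟩
  haveI : NeZero r := ⟨by omega⟩
  have key := main_complex b r M hrad c
  calc ∑ x ∈ Finset.range b, ‖∑ m ∈ Finset.Icc 1 M, c m * kloosterman (r * x) m (b * r)‖ ^ 2
      = ∑ x ∈ Finset.range b,
          ((∑ m ∈ Finset.Icc 1 M, c m * kloosterman (r * x) m (b * r)) *
            (starRingEnd ℂ) (∑ m ∈ Finset.Icc 1 M, c m * kloosterman (r * x) m (b * r))).re :=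
        Finset.sum_congr rfl fun x _ => norm_sq_re _
    _ = ((b:ℂ) * (r:ℂ)^2 *
        ∑ y ∈ (Finset.range b).filter (fun y => Nat.Coprime y b),
          (∑ m ∈ (Finset.Icc 1 M).filter (fun m => r ∣ m),
              c m * eInt (((y * (m / r) : ℕ)) : ℤ) b) *
            (starRingEnd ℂ) (∑ m ∈ (Finset.Icc 1 M).filter (fun m => r ∣ m),
              c m * eInt (((y * (m / r) : ℕ)) : ℤ) b)).re := by
        rw [← Complex.re_sum, key]
    _ = (b : ℝ) * r ^ 2 *
        ∑ y ∈ (Finset.range b).filter (fun y => Nat.Coprime y b),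
          ‖∑ m ∈ (Finset.Icc 1 M).filter (fun m => r ∣ m),
              c m * eBase (((y * (m / r) : ℕ) : ℝ) / (b : ℝ))‖ ^ 2 := by
        rw [show ((b:ℂ) * (r:ℂ)^2) = ((((b:ℝ) * (r:ℝ)^2 : ℝ)) : ℂ) by push_cast; ring,
          Complex.re_ofReal_mul, Complex.re_sum]
        congr 1
        refine Finset.sum_congr rfl fun y _ => ?_
        have hsum : (∑ m ∈ (Finset.Icc 1 M).filter (fun m => r ∣ m),
              c m * eInt (((y * (m / r) : ℕ)) : ℤ) b)
            = ∑ m ∈ (Finset.Icc 1 M).filter (fun m => r ∣ m),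
              c m * eBase (((y * (m / r) : ℕ) : ℝ) / (b : ℝ)) :=
          Finset.sum_congr rfl fun m _ => by rw [eInt_natCast]
        rw [hsum, ← norm_sq_re]
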